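/- Let S be a metric space whose topology has a countable base τ_b, and let P_n, P be Borel probability measures on S. If P_n(O) → P(O) for each finite intersection O = ∩_{i=1}^k O_i with O_i ∈ τ_b, then P_n converges weakly to P. -/

import Mathlib

open MeasureTheory Filter Topology BoundedContinuousFunction
open scoped ENNReal NNReal

private lemma iInter_append_aux {α : Type*} {m n : ℕ} (f : Fin m → Set α) (g : Fin n → Set α) :
    ⋂ i, Fin.append f g i = (⋂ i, f i) ∩ ⋂ i, g i := by
  ext x
  simp only [Set.mem_iInter, Set.mem_inter_iff]
  constructor
  · intro h
    exact ⟨fun i => by simpa [Fin.append_left] using h (Fin.castAdd n i),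
      fun i => by simpa [Fin.append_right] using h (Fin.natAdd m i)⟩
  · rintro ⟨h1, h2⟩ i
    refine Fin.addCases (fun j => ?_) (fun j => ?_) i
    · simpa [Fin.append_left] using h1 j
    · simpa [Fin.append_right] using h2 j

theorem stmt9 {S : Type*} [MetricSpace S] [MeasurableSpace S] [BorelSpace S]
    (τb : Set (Set S)) (hcount : τb.Countable)
    (hbasis : TopologicalSpace.IsTopologicalBasis τb)
    (P : ℕ → Measure S) (Q : Measure S)
    (hP : ∀ n, IsProbabilityMeasure (P n)) (hQ : IsProbabilityMeasure Q)
    (h : ∀ (k : ℕ) (O : Fin (k + 1) → Set S), (∀ i, O i ∈ τb) →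
      Tendsto (fun n => P n (⋂ i, O i)) atTop (𝓝 (Q (⋂ i, O i)))) :
    ∀ f : S →ᵇ ℝ, Tendsto (fun n => ∫ x, f x ∂(P n)) atTop (𝓝 (∫ x, f x ∂Q)) := by
  classical
  set 𝒞 : Set (Set S) :=
    {t | ∃ k : ℕ, ∃ O : Fin (k + 1) → Set S, (∀ i, O i ∈ τb) ∧ t = ⋂ i, O i} with h𝒞
  have hCopen : ∀ t ∈ 𝒞, IsOpen t := by
    rintro t ⟨k, O, hO, rfl⟩
    exact isOpen_iInter_of_finite fun i => hbasis.isOpen (hO i)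
  have hCtend : ∀ t ∈ 𝒞, Tendsto (fun n => P n t) atTop (𝓝 (Q t)) := by
    rintro t ⟨k, O, hO, rfl⟩
    exact h k O hO
  have hCinter : ∀ t₁ ∈ 𝒞, ∀ t₂ ∈ 𝒞, t₁ ∩ t₂ ∈ 𝒞 := by
    rintro t₁ ⟨k, O, hO, rfl⟩ t₂ ⟨l, O', hO', rfl⟩
    refine ⟨k + 1 + l, (Fin.append O O' : Fin (k + 1 + (l + 1)) → Set S), ?_, ?_⟩
    · intro i
      refine Fin.addCases (m := k + 1) (n := l + 1) (fun j => ?_) (fun j => ?_) i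
      · simpa [Fin.append_left] using hO j
      · simpa [Fin.append_right] using hO' j
    · exact (iInter_append_aux O O').symm
  -- convergence on finite unions of elements of 𝒞
  have hUnion : ∀ m : ℕ, ∀ C : Fin m → Set S, (∀ j, C j ∈ 𝒞) →
      Tendsto (fun n => P n (⋃ j, C j)) atTop (𝓝 (Q (⋃ j, C j))) := by
    intro m
    induction m with
    | zero =>
      intro C _
      simp only [Set.iUnion_of_empty, measure_empty]
      exact tendsto_const_nhds
    | succ m ih =>
      intro C hC
      have key : (⋃ j, C j) = (⋃ j : Fin m, C j.castSucc) ∪ C (Fin.last m) := by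
        ext x
        simp only [Set.mem_iUnion, Set.mem_union]
        constructor
        · rintro ⟨j, hj⟩
          rcases Fin.eq_castSucc_or_eq_last j with ⟨j', rfl⟩ | rfl
          · exact Or.inl ⟨j', hj⟩
          · exact Or.inr hj
        · rintro (⟨j, hj⟩ | hj)
          · exact ⟨j.castSucc, hj⟩
          · exact ⟨Fin.last m, hj⟩
      set U := ⋃ j : Fin m, C j.castSucc with hUdef
      set D := C (Fin.last m) with hDdef
      have hU : Tendsto (fun n => P n U) atTop (𝓝 (Q U)) := ih _ fun j => hC _
      have hD : Tendsto (fun n => P n D) atTop (𝓝 (Q D)) := hCtend _ (hC _)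
      have hUD : U ∩ D = ⋃ j : Fin m, (C j.castSucc ∩ D) := Set.iUnion_inter _ _
      have hI : Tendsto (fun n => P n (U ∩ D)) atTop (𝓝 (Q (U ∩ D))) := by
        rw [hUD]
        exact ih _ fun j => hCinter _ (hC _) _ (hC _)
      have hmeasD : MeasurableSet D := (hCopen D (hC _)).measurableSet
      have hsum : ∀ μ : Measure S, μ (U ∪ D) + μ (U ∩ D) = μ U + μ D := fun μ =>
        measure_union_add_inter U hmeasD
      have h1 : Tendsto (fun n => P n U + P n D) atTop (𝓝 (Q U + Q D)) := hU.add hD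
      have h2 : Tendsto (fun n => (P n U + P n D) - P n (U ∩ D)) atTop
          (𝓝 ((Q U + Q D) - Q (U ∩ D))) :=
        ENNReal.Tendsto.sub h1 hI (Or.inr (measure_ne_top Q _))
      have e1 : ∀ μ : Measure S, [IsProbabilityMeasure μ] →
          (μ U + μ D) - μ (U ∩ D) = μ (U ∪ D) := by
        intro μ _
        rw [← hsum μ, ENNReal.add_sub_cancel_right (measure_ne_top μ _)]
      rw [key]
      have := h2
      simp only [e1 (Q), fun n => e1 (P n)] at this
      exact this
  -- liminf condition for open sets
  have hopen : ∀ G : Set S, IsOpen G → Q G ≤ atTop.liminf fun n => P n G := by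
    intro G hG
    obtain ⟨B, hBsub, hBeq⟩ := hbasis.open_eq_sUnion hG
    rcases B.eq_empty_or_nonempty with rfl | hBne
    · simp [hBeq]
    obtain ⟨f, rfl⟩ := (hcount.mono hBsub).exists_eq_range hBne
    have hGeq : G = ⋃ j, f j := by rw [hBeq, Set.sUnion_range]
    have hfτ : ∀ j, f j ∈ τb := fun j => hBsub ⟨j, rfl⟩
    have hfC : ∀ j : ℕ, f j ∈ 𝒞 := fun j =>
      ⟨0, fun _ => f j, fun _ => hfτ j, (Set.iInter_const _).symm⟩
    have haccum : ∀ m : ℕ, Set.accumulate f m = ⋃ j : Fin (m + 1), f j := by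
      intro m
      ext x
      simp [Set.mem_accumulate, Set.mem_iUnion, Fin.exists_iff, Nat.lt_succ_iff]
    have hbound : ∀ m : ℕ, Q (Set.accumulate f m) ≤ atTop.liminf fun n => P n G := by
      intro m
      have htend : Tendsto (fun n => P n (⋃ j : Fin (m + 1), f j)) atTop
          (𝓝 (Q (⋃ j : Fin (m + 1), f j))) := hUnion (m + 1) (fun j => f j) fun j => hfC j
      rw [haccum m, ← htend.liminf_eq]
      refine liminf_le_liminf (Eventually.of_forall fun n => ?_)
      refine measure_mono ?_
      rw [hGeq]
      exact Set.iUnion_subset fun j => Set.subset_iUnion f (j : ℕ)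
    have htendQ : Tendsto (fun m => Q (Set.accumulate f m)) atTop (𝓝 (Q G)) := by
      rw [hGeq]
      exact tendsto_measure_iUnion_accumulate
    exact le_of_tendsto' htendQ hbound
  -- conclude via portmanteau
  set μ : ProbabilityMeasure S := ⟨Q, hQ⟩ with hμ
  set μs : ℕ → ProbabilityMeasure S := fun n => ⟨P n, hP n⟩ with hμs
  have main : Tendsto μs atTop (𝓝 μ) := by
    apply MeasureTheory.tendsto_of_forall_isOpen_le_liminf
    intro G hG
    have aux : ENNReal.ofNNReal (liminf (fun i => μs i G) atTop) =
        liminf (ENNReal.ofNNReal ∘ fun i => μs i G) atTop := by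
      refine Monotone.map_liminf_of_continuousAt (F := atTop) ENNReal.coe_mono (fun i => μs i G)
        ENNReal.continuous_coe.continuousAt ?_ ?_
      · exact IsBoundedUnder.isCoboundedUnder_ge
          (isBoundedUnder_of ⟨1, fun i => ProbabilityMeasure.apply_le_one _ _⟩)
      · exact isBoundedUnder_of ⟨0, fun i => zero_le⟩
    rw [← ENNReal.coe_le_coe, aux]
    have : (μ G : ℝ≥0∞) = Q G := ProbabilityMeasure.ennreal_coeFn_eq_coeFn_toMeasure μ G
    rw [this]
    have : (ENNReal.ofNNReal ∘ fun i => μs i G) = fun i => P i G := by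
      funext i
      exact ProbabilityMeasure.ennreal_coeFn_eq_coeFn_toMeasure (μs i) G
    rw [this]
    exact hopen G hG
  intro f
  exact ProbabilityMeasure.tendsto_iff_forall_integral_tendsto.mp main f
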